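/- A Baire topological group G that is Steinhaus satisfies automatic continuity: for every separable topological group H and every group homomorphism φ : G → H, and every neighborhood V of 1 in H, there is a neighborhood U of 1 in G with φ(U) ⊆ V. -/

import Mathlib

open Pointwise Topology

/-- A topological group `G` is Steinhaus with exponent `n` if for every symmetric `W ⊆ G`
such that countably many left translates of `W` cover `G`, the power `Wⁿ` contains a
neighborhood of the identity. -/
def Steinhaus (G : Type*) [Group G] [TopologicalSpace G] (n : ℕ) : Prop :=
  ∀ W : Set G, W⁻¹ = W → (∃ g : ℕ → G, (⋃ i, g i • W) = Set.univ) →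
    W ^ n ∈ 𝓝 (1 : G)

theorem aux_pow_nhds {H : Type*} [Group H] [TopologicalSpace H] [IsTopologicalGroup H]
    (n : ℕ) (V : Set H) (hV : V ∈ 𝓝 (1 : H)) :
    ∃ U : Set H, IsOpen U ∧ (1 : H) ∈ U ∧ U⁻¹ = U ∧ U ^ n ⊆ V := by
  suffices h : ∃ U : Set H, IsOpen U ∧ (1 : H) ∈ U ∧ U ^ n ⊆ V by
    obtain ⟨U, hUo, hU1, hUp⟩ := h
    refine ⟨U ∩ U⁻¹, hUo.inter hUo.inv, ⟨hU1, by simpa using hU1⟩, by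
      simp [Set.inter_comm, Set.inter_inv], ?_⟩
    exact (Set.pow_subset_pow_left Set.inter_subset_left).trans hUp
  induction n generalizing V with
  | zero =>
    exact ⟨Set.univ, isOpen_univ, trivial, by
      simpa using Set.singleton_subset_iff.2 (mem_of_mem_nhds hV)⟩
  | succ n ih =>
    obtain ⟨W, hWo, hW1, hWW⟩ := exists_open_nhds_one_mul_subset hV
    obtain ⟨U, hUo, hU1, hUp⟩ := ih W (hWo.mem_nhds hW1)
    refine ⟨U ∩ W, hUo.inter hWo, ⟨hU1, hW1⟩, ?_⟩
    rw [pow_succ]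
    calc (U ∩ W) ^ n * (U ∩ W)
        ⊆ U ^ n * W := Set.mul_subset_mul
          (Set.pow_subset_pow_left Set.inter_subset_left)
          Set.inter_subset_right
      _ ⊆ W * W := Set.mul_subset_mul_right hUp
      _ ⊆ V := hWW

/-- A Baire Steinhaus topological group satisfies automatic continuity: for every
homomorphism `φ` to a separable group and every neighborhood `V` of `1` in `H`, there is
a neighborhood `U` of `1` in `G` with `φ(U) ⊆ V`. -/
theorem stmt3 {G H : Type*} [Group G] [TopologicalSpace G] [IsTopologicalGroup G]
    [BaireSpace G] [Group H] [TopologicalSpace H] [IsTopologicalGroup H]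
    [TopologicalSpace.SeparableSpace H] (n : ℕ) (hS : Steinhaus G n)
    (φ : G →* H) (V : Set H) (hV : V ∈ 𝓝 (1 : H)) :
    ∃ U ∈ 𝓝 (1 : G), φ '' U ⊆ V := by
  classical
  obtain ⟨U, hUo, hU1, hUsymm, hUpow⟩ := aux_pow_nhds (2 * n) V hV
  -- W := φ⁻¹ (U * U)
  set W : Set G := φ ⁻¹' (U * U) with hWdef
  have hWsymm : W⁻¹ = W := by
    ext x
    simp only [hWdef, Set.mem_inv, Set.mem_preimage, map_inv]
    constructor <;> intro h
    · have : (φ x)⁻¹⁻¹ ∈ (U * U)⁻¹ := Set.inv_mem_inv.2 h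
      simpa [mul_inv_rev, hUsymm] using this
    · have : (φ x)⁻¹ ∈ (U * U)⁻¹ := Set.inv_mem_inv.2 h
      simpa [mul_inv_rev, hUsymm] using this
  have : Nonempty H := ⟨1⟩
  obtain ⟨d, hd⟩ := TopologicalSpace.exists_dense_seq H
  -- choose g i with φ (g i) ∈ d i • U when possible
  have hcov : ∃ g : ℕ → G, (⋃ i, g i • W) = Set.univ := by
    refine ⟨fun i => if h : ∃ x : G, φ x ∈ d i • U then h.choose else 1, ?_⟩
    ext x
    simp only [Set.mem_iUnion, Set.mem_univ, iff_true]
    -- find i with d i ∈ φ x • U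
    have hopen : IsOpen (φ x • U) := hUo.smul _
    have hne : (φ x • U).Nonempty := ⟨φ x, 1, hU1, mul_one _⟩
    obtain ⟨i, hi⟩ := hd.exists_mem_open hopen hne
    have hx : φ x ∈ d i • U := by
      obtain ⟨u, hu, hdu⟩ := hi
      refine ⟨u⁻¹, ?_, ?_⟩
      · rw [← hUsymm]; exact Set.inv_mem_inv.2 hu
      · rw [← hdu]; simp [smul_eq_mul, mul_assoc]
    have hex : ∃ y : G, φ y ∈ d i • U := ⟨x, hx⟩
    refine ⟨i, ?_⟩
    rw [dif_pos hex]
    set y := hex.choose with hy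
    have hφy : φ y ∈ d i • U := hex.choose_spec
    refine ⟨y⁻¹ * x, ?_, by simp [smul_eq_mul]⟩
    simp only [hWdef, Set.mem_preimage, map_mul, map_inv]
    obtain ⟨u₁, hu₁, h₁⟩ := hφy
    obtain ⟨u₂, hu₂, h₂⟩ := hx
    have : (φ y)⁻¹ * φ x = u₁⁻¹ * u₂ := by
      rw [← h₁, ← h₂]; simp [smul_eq_mul, mul_inv_rev, mul_assoc]
    rw [this]
    exact Set.mul_mem_mul (by rw [← hUsymm]; exact Set.inv_mem_inv.2 hu₁) hu₂
  have hWn : W ^ n ∈ 𝓝 (1 : G) := hS W hWsymm hcov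
  refine ⟨W ^ n, hWn, ?_⟩
  rintro _ ⟨x, hx, rfl⟩
  apply hUpow
  have himg : ∀ m : ℕ, ∀ x ∈ W ^ m, φ x ∈ (U * U) ^ m := by
    intro m
    induction m with
    | zero => intro x hx; simp_all
    | succ m ih =>
      intro x hx
      rw [pow_succ] at hx ⊢
      obtain ⟨a, ha, b, hb, rfl⟩ := hx
      rw [map_mul]
      exact Set.mul_mem_mul (ih a ha) hb
  have := himg n x hx
  have heq : (U * U) ^ n = U ^ (2 * n) := by
    rw [two_mul, pow_add, ← sq, ← pow_mul, mul_comm 2 n, pow_mul, sq]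
  rwa [heq] at this
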